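/- Let R be a commutative ℂ-algebra and n a natural number. Let M be an n×n skew-symmetric matrix with entries in R, and let A, B be invertible n×n matrices with complex entries (viewed as matrices over R via the algebra map) such that A⁻¹ * M * B is also skew-symmetric. Then there exists an invertible n×n complex matrix S such that A⁻¹ * M * B = Sᵀ * M * S (with S viewed as a matrix over R). -/

import Mathlib

open Polynomial

private lemma newton_step {p s : ℂ[X]} (hc : IsCoprime p s) {k : ℕ} (hk : 1 ≤ k)
    (h : s ^ k ∣ p ^ 2 - X) : ∃ q : ℂ[X], IsCoprime q s ∧ s ^ (k + 1) ∣ q ^ 2 - X := by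
  have h2 : IsUnit (2 : ℂ[X]) := by
    rw [show (2 : ℂ[X]) = C 2 from (map_ofNat C 2).symm]
    exact isUnit_C.mpr (by norm_num)
  have hc2 : IsCoprime (2 * p) (s ^ k) :=
    ((isCoprime_one_left.of_isCoprime_of_dvd_left h2.dvd).mul_left hc).pow_right
  obtain ⟨u, v, huv⟩ := hc2
  obtain ⟨w, hw⟩ := id h
  have hs1 : s ∣ p ^ 2 - X := dvd_trans (dvd_pow_self s (by omega)) h
  obtain ⟨w1, hw1⟩ := hs1
  refine ⟨p - (p ^ 2 - X) * u, ?_, ?_⟩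
  · have : p - (p ^ 2 - X) * u = p + s * (-(w1 * u)) := by rw [hw1]; ring
    rw [this]
    exact hc.add_mul_left_left _
  · have key : (p - (p ^ 2 - X) * u) ^ 2 - X
        = (p ^ 2 - X) * (1 - u * (2 * p)) + (p ^ 2 - X) ^ 2 * u ^ 2 := by ring
    rw [key]
    have h1 : 1 - u * (2 * p) = v * s ^ k := by linear_combination -huv
    refine dvd_add ?_ ?_
    · rw [h1, hw1]
      exact ⟨w1 * v, by ring⟩
    · calc s ^ (k + 1) ∣ s ^ (2 * k) := pow_dvd_pow s (by omega)
      _ ∣ (p ^ 2 - X) ^ 2 := by rw [two_mul, pow_add, pow_two]; exact mul_dvd_mul h h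
      _ ∣ _ := Dvd.intro _ rfl

private lemma newton_iter {p s : ℂ[X]} (hc : IsCoprime p s) (h : s ∣ p ^ 2 - X) (k : ℕ) :
    ∃ q : ℂ[X], s ^ (k + 1) ∣ q ^ 2 - X := by
  induction k with
  | zero => exact ⟨p, by simpa using h⟩
  | succ k ih =>
    clear ih
    suffices H : ∀ k, ∃ q : ℂ[X], IsCoprime q s ∧ s ^ (k + 1) ∣ q ^ 2 - X by
      obtain ⟨q, _, hq⟩ := H (k + 1); exact ⟨q, hq⟩
    intro k
    induction k with
    | zero => exact ⟨p, hc, by simpa using h⟩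
    | succ k ih =>
      obtain ⟨q, hqc, hq⟩ := ih
      exact newton_step hqc (by omega) hq

private lemma exists_sqrt_mod (m : ℂ[X]) (h0 : m.eval 0 ≠ 0) : ∃ p : ℂ[X], m ∣ p ^ 2 - X := by
  classical
  have hm : m ≠ 0 := fun h => h0 (by simp [h])
  set T := m.roots.toFinset with hT
  choose r hr using fun lam : ℂ => IsAlgClosed.exists_pow_nat_eq lam (n := 2) (by norm_num)
  set p0 := Lagrange.interpolate T id r with hp0
  set s := ∏ lam ∈ T, (X - C lam) with hs
  have hmemne : ∀ lam ∈ T, lam ≠ 0 := by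
    intro lam hlam hl0
    have : IsRoot m lam := (mem_roots hm).mp (Multiset.mem_toFinset.mp hlam)
    exact h0 (by simpa [hl0] using this)
  have heval : ∀ lam ∈ T, eval lam p0 = r lam := by
    intro lam hlam
    exact Lagrange.eval_interpolate_at_node (v := id) (r := r) (Set.injOn_id _) hlam
  have hsd : s ∣ p0 ^ 2 - X := by
    refine Finset.prod_dvd_of_coprime ?_ ?_
    · intro a _ b _ hab
      exact pairwise_coprime_X_sub_C Function.injective_id hab
    · intro lam hlam
      refine dvd_iff_isRoot.mpr ?_
      simp [IsRoot, heval lam hlam, hr lam]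
  have hcop : IsCoprime p0 s := by
    refine IsCoprime.symm (IsCoprime.prod_left fun lam hlam => ?_)
    rw [(irreducible_X_sub_C lam).coprime_iff_not_dvd, dvd_iff_isRoot]
    intro hroot
    have : r lam = 0 := by rwa [IsRoot, heval lam hlam] at hroot
    exact hmemne lam hlam (by rw [← hr lam, this]; ring)
  obtain ⟨q, hq⟩ := newton_iter hcop hsd m.roots.card
  refine ⟨q, dvd_trans ?_ hq⟩
  -- m ∣ s ^ (card + 1)
  have hsplit : m = C m.leadingCoeff * (m.roots.map fun a => X - C a).prod :=
    (IsAlgClosed.splits m).eq_prod_roots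
  have hP : (m.roots.map fun a => X - C a).prod ∣ s ^ m.roots.card := by
    have hle : m.roots ≤ m.roots.card • m.roots.dedup := by
      rw [Multiset.le_iff_count]
      intro a
      rw [Multiset.count_nsmul, Multiset.count_dedup]
      by_cases ha : a ∈ m.roots
      · simpa [ha] using Multiset.count_le_card a m.roots
      · simp [ha, Multiset.count_eq_zero_of_notMem ha]
    have := Multiset.prod_dvd_prod_of_le (Multiset.map_le_map (f := fun a => X - C a) hle)
    rw [Multiset.map_nsmul, Multiset.prod_nsmul] at this
    refine this.trans (dvd_of_eq ?_)
    rw [hs, Finset.prod_eq_multiset_prod, hT, Multiset.toFinset_val]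
  have hunit : IsUnit (C m.leadingCoeff) := isUnit_C.mpr (isUnit_iff_ne_zero.mpr
    (leadingCoeff_ne_zero.mpr hm))
  calc m ∣ (m.roots.map fun a => X - C a).prod :=
        (dvd_of_eq hsplit).trans (by
          simpa using mul_dvd_mul (hunit.dvd : _ ∣ (1 : ℂ[X])) (dvd_refl (m.roots.map fun a => X - C a).prod))
    _ ∣ s ^ m.roots.card := hP
    _ ∣ s ^ (m.roots.card + 1) := pow_dvd_pow s (Nat.le_succ _)

open Matrix

private lemma exists_poly_sqrt {n : ℕ} (Cm : Matrix (Fin n) (Fin n) ℂ) (hC : IsUnit Cm) :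
    ∃ p : ℂ[X], (aeval Cm p) * (aeval Cm p) = Cm := by
  have hdet : Cm.det ≠ 0 := ((isUnit_iff_isUnit_det Cm).mp hC).ne_zero
  have h0 : Cm.charpoly.eval 0 ≠ 0 := by
    rw [← coeff_zero_eq_eval_zero]
    intro h
    rw [Matrix.det_eq_sign_charpoly_coeff, h, mul_zero] at hdet
    exact hdet rfl
  obtain ⟨p, t, ht⟩ := exists_sqrt_mod Cm.charpoly h0
  refine ⟨p, ?_⟩
  have h1 := congrArg (aeval Cm) ht
  rw [map_sub, map_pow, _root_.map_mul, aeval_X, Matrix.aeval_self_charpoly, zero_mul,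
    sub_eq_zero] at h1
  rw [← pow_two]
  exact h1

private lemma pow_transfer {n : ℕ} {R : Type*} [CommRing R] [Algebra ℂ R]
    (Cm : Matrix (Fin n) (Fin n) ℂ) (M : Matrix (Fin n) (Fin n) R)
    (hrel : (Cmᵀ.map (algebraMap ℂ R)) * M = M * (Cm.map (algebraMap ℂ R))) (k : ℕ) :
    (((Cm ^ k)ᵀ).map (algebraMap ℂ R)) * M = M * ((Cm ^ k).map (algebraMap ℂ R)) := by
  induction k with
  | zero => simp [Matrix.map_one]
  | succ k ih =>
    have hcomm : ((Cm ^ k).map (algebraMap ℂ R)) * (Cm.map (algebraMap ℂ R))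
        = (Cm.map (algebraMap ℂ R)) * ((Cm ^ k).map (algebraMap ℂ R)) := by
      rw [← Matrix.map_mul, ← Matrix.map_mul, ← pow_succ, ← pow_succ']
    calc (((Cm ^ (k+1))ᵀ).map (algebraMap ℂ R)) * M
        = (Cmᵀ.map (algebraMap ℂ R)) * ((((Cm ^ k)ᵀ).map (algebraMap ℂ R)) * M) := by
          rw [pow_succ, transpose_mul, Matrix.map_mul, mul_assoc]
      _ = (Cmᵀ.map (algebraMap ℂ R)) * M * ((Cm ^ k).map (algebraMap ℂ R)) := by
          rw [ih, mul_assoc]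
      _ = M * ((Cm ^ (k+1)).map (algebraMap ℂ R)) := by
          rw [hrel, pow_succ, Matrix.map_mul, mul_assoc, ← hcomm]

private lemma poly_transfer {n : ℕ} {R : Type*} [CommRing R] [Algebra ℂ R]
    (Cm : Matrix (Fin n) (Fin n) ℂ) (M : Matrix (Fin n) (Fin n) R)
    (hrel : (Cmᵀ.map (algebraMap ℂ R)) * M = M * (Cm.map (algebraMap ℂ R))) (p : ℂ[X]) :
    (((aeval Cm p)ᵀ).map (algebraMap ℂ R)) * M = M * ((aeval Cm p).map (algebraMap ℂ R)) := by
  have hmap : ∀ (a : ℂ) (D : Matrix (Fin n) (Fin n) ℂ),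
      (a • D).map (algebraMap ℂ R) = (algebraMap ℂ R a) • D.map (algebraMap ℂ R) := by
    intro a D; ext i j
    simp [Matrix.map_apply, smul_eq_mul]
  have hmapadd : ∀ (D E : Matrix (Fin n) (Fin n) ℂ),
      (D + E).map (algebraMap ℂ R) = D.map (algebraMap ℂ R) + E.map (algebraMap ℂ R) := by
    intro D E; ext i j; simp [Matrix.map_apply]
  induction p using Polynomial.induction_on' with
  | add p q hp hq =>
    rw [map_add, transpose_add, hmapadd, hmapadd, add_mul, mul_add, hp, hq]
  | monomial k a =>
    have haev : aeval Cm (monomial k a) = a • Cm ^ k := by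
      rw [aeval_monomial, ← Algebra.smul_def]
    rw [haev, transpose_smul, hmap, hmap, smul_mul_assoc, mul_smul_comm,
      pow_transfer Cm M hrel k]

theorem stmt_0 (R : Type*) [CommRing R] [Algebra ℂ R] (n : ℕ)
    (M : Matrix (Fin n) (Fin n) R) (hM : Mᵀ = -M)
    (A B : Matrix (Fin n) (Fin n) ℂ) (hA : IsUnit A) (hB : IsUnit B)
    (hskew : ((A⁻¹.map (algebraMap ℂ R)) * M * (B.map (algebraMap ℂ R)))ᵀ =
      -((A⁻¹.map (algebraMap ℂ R)) * M * (B.map (algebraMap ℂ R)))) :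
    ∃ S : Matrix (Fin n) (Fin n) ℂ, IsUnit S ∧
      (A⁻¹.map (algebraMap ℂ R)) * M * (B.map (algebraMap ℂ R)) =
        (S.map (algebraMap ℂ R))ᵀ * M * (S.map (algebraMap ℂ R)) := by
  have hAdet : IsUnit A.det := (isUnit_iff_isUnit_det A).mp hA
  have hmapone : (1 : Matrix (Fin n) (Fin n) ℂ).map (algebraMap ℂ R) = 1 :=
    Matrix.map_one _ (map_zero _) (map_one _)
  have hA3 : (A⁻¹.map (algebraMap ℂ R))ᵀ * (Aᵀ.map (algebraMap ℂ R)) = 1 := by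
    rw [← Matrix.transpose_map, ← Matrix.map_mul, ← transpose_mul, mul_nonsing_inv A hAdet,
      transpose_one, hmapone]
  have hA4 : (Aᵀ.map (algebraMap ℂ R)) * (A⁻¹ᵀ.map (algebraMap ℂ R)) = 1 := by
    rw [← Matrix.map_mul, ← transpose_mul, nonsing_inv_mul A hAdet, transpose_one, hmapone]
  -- step 1: the basic relation coming from skewness
  have heq : (B.map (algebraMap ℂ R))ᵀ * M * (A⁻¹.map (algebraMap ℂ R))ᵀ
      = (A⁻¹.map (algebraMap ℂ R)) * M * (B.map (algebraMap ℂ R)) := by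
    have h1 : ((A⁻¹.map (algebraMap ℂ R)) * M * (B.map (algebraMap ℂ R)))ᵀ
        = (B.map (algebraMap ℂ R))ᵀ * Mᵀ * (A⁻¹.map (algebraMap ℂ R))ᵀ := by
      rw [transpose_mul, transpose_mul, mul_assoc]
    rw [h1, hM, mul_neg, neg_mul] at hskew
    exact neg_inj.mp hskew
  have hL : (((B * Aᵀ)ᵀ).map (algebraMap ℂ R)) * M
      = (A.map (algebraMap ℂ R)) * ((B.map (algebraMap ℂ R))ᵀ * M * (A⁻¹.map (algebraMap ℂ R))ᵀ)
        * (Aᵀ.map (algebraMap ℂ R)) := by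
    rw [transpose_mul, transpose_transpose, Matrix.map_mul, Matrix.transpose_map]
    simp only [mul_assoc]
    rw [hA3, mul_one]
  have hR : M * ((B * Aᵀ).map (algebraMap ℂ R))
      = (A.map (algebraMap ℂ R)) * ((A⁻¹.map (algebraMap ℂ R)) * M * (B.map (algebraMap ℂ R)))
        * (Aᵀ.map (algebraMap ℂ R)) := by
    have hA1 : (A.map (algebraMap ℂ R)) * (A⁻¹.map (algebraMap ℂ R)) = 1 := by
      rw [← Matrix.map_mul, mul_nonsing_inv A hAdet, hmapone]
    rw [Matrix.map_mul]
    simp only [mul_assoc]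
    rw [← mul_assoc (A.map (algebraMap ℂ R)), hA1, one_mul]
  have hrel : (((B * Aᵀ)ᵀ).map (algebraMap ℂ R)) * M = M * ((B * Aᵀ).map (algebraMap ℂ R)) := by
    rw [hL, hR, heq]
  -- step 2: polynomial square root of B * Aᵀ
  have hAt : IsUnit (Aᵀ) := (isUnit_iff_isUnit_det _).mpr (by rwa [det_transpose])
  obtain ⟨p, hp⟩ := exists_poly_sqrt (B * Aᵀ) (hB.mul hAt)
  have htrans := poly_transfer (B * Aᵀ) M hrel p
  set P := aeval (B * Aᵀ) p with hP
  have hPdet : IsUnit P.det := by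
    have h1 : P.det * P.det = (B * Aᵀ).det := by rw [← det_mul, hp]
    have h2 : IsUnit (P.det * P.det) := by
      rw [h1]; exact ((isUnit_iff_isUnit_det _).mp (hB.mul hAt))
    exact isUnit_of_mul_isUnit_left h2
  have hS : IsUnit (P * A⁻¹ᵀ) := by
    rw [isUnit_iff_isUnit_det, det_mul]
    refine hPdet.mul ?_
    have : A⁻¹ᵀ.det * A.det = 1 := by
      rw [det_transpose, ← det_mul, nonsing_inv_mul A hAdet, det_one]
    exact IsUnit.of_mul_eq_one _ this
  refine ⟨P * A⁻¹ᵀ, hS, ?_⟩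
  have hfinal : (((P * A⁻¹ᵀ).map (algebraMap ℂ R))ᵀ) * M * ((P * A⁻¹ᵀ).map (algebraMap ℂ R))
      = (A⁻¹.map (algebraMap ℂ R)) * M * (B.map (algebraMap ℂ R)) := by
    calc (((P * A⁻¹ᵀ).map (algebraMap ℂ R))ᵀ) * M * ((P * A⁻¹ᵀ).map (algebraMap ℂ R))
        = (A⁻¹.map (algebraMap ℂ R)) * (((Pᵀ).map (algebraMap ℂ R)) * M
            * ((P.map (algebraMap ℂ R)) * (A⁻¹ᵀ.map (algebraMap ℂ R)))) := by
          rw [← Matrix.transpose_map, transpose_mul, transpose_transpose, Matrix.map_mul,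
            Matrix.map_mul]
          simp only [mul_assoc]
      _ = (A⁻¹.map (algebraMap ℂ R)) * (M * (P.map (algebraMap ℂ R))
            * ((P.map (algebraMap ℂ R)) * (A⁻¹ᵀ.map (algebraMap ℂ R)))) := by
          rw [htrans]
      _ = (A⁻¹.map (algebraMap ℂ R)) * (M * (((P * P).map (algebraMap ℂ R))
            * (A⁻¹ᵀ.map (algebraMap ℂ R)))) := by
          rw [Matrix.map_mul]
          simp only [mul_assoc]
      _ = (A⁻¹.map (algebraMap ℂ R)) * (M * ((B.map (algebraMap ℂ R))
            * ((Aᵀ.map (algebraMap ℂ R)) * (A⁻¹ᵀ.map (algebraMap ℂ R))))) := by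
          rw [hp, Matrix.map_mul]
          simp only [mul_assoc]
      _ = (A⁻¹.map (algebraMap ℂ R)) * M * (B.map (algebraMap ℂ R)) := by
          rw [hA4, mul_one, ← mul_assoc]
  exact hfinal.symm
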